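/- arXiv:1405.6618 — 4 statements merged into one kernel-verified Lean document; each statement's English description precedes it below -/
import Mathlib

section
/- For every nonnegative integer n and complex number x such that no denominator vanishes, the sum over k from 0 to n of ((3x)_k (1-3x)_k (-n)_k) / (k! (1/2)_k (-3n)_k) * (3/4)^k equals ((1/3 + x)_n (2/3 - x)_n) / ((1/3)_n (2/3)_n). (Gosper's first 3F2(3/4) identity.) -/
/-- Pochhammer symbol (rising factorial) `(a)_k`. -/
noncomputable def poch (a : ℂ) (k : ℕ) : ℂ := ∏ j ∈ Finset.range k, (a + j)

lemma poch_zero (a : ℂ) : poch a 0 = 1 := by simp [poch]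

lemma poch_succ (a : ℂ) (k : ℕ) : poch a (k+1) = poch a k * (a + k) := by
  simp [poch, Finset.prod_range_succ]

lemma poch_succ' (a : ℂ) (k : ℕ) : poch a (k+1) = a * poch (a+1) k := by
  unfold poch
  rw [Finset.prod_range_succ']
  simp only [Nat.cast_zero, add_zero, mul_comm]
  congr 1
  apply Finset.prod_congr rfl
  intro i _
  push_cast
  ring

lemma poch_shift (a : ℂ) (m : ℕ) : poch (a-1) m * (a - 1 + m) = (a-1) * poch a m := by
  have h1 := poch_succ (a-1) m
  have h2 := poch_succ' (a-1) m
  rw [show a - 1 + 1 = a by ring] at h2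
  rw [← h1, h2]

lemma poch_step_down (a a' : ℂ) (m : ℕ) (h : a' = a - 1) (d : ℂ) (hd : d = a - 1 + m)
    (hdne : d ≠ 0) : poch a' m = a' * poch a m / d := by
  subst h; subst hd
  rw [eq_div_iff hdne]
  exact poch_shift a m

lemma poch_pos_ne_zero (r : ℝ) (hr : 0 < r) (k : ℕ) : poch (r : ℂ) k ≠ 0 := by
  unfold poch
  rw [Finset.prod_ne_zero_iff]
  intro i _
  have h : ((r : ℂ) + i) = ((r + i : ℝ) : ℂ) := by push_cast; ring
  rw [h]
  exact_mod_cast (by positivity : (r + i : ℝ) ≠ 0)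

lemma poch_half_ne_zero (k : ℕ) : poch (1/2 : ℂ) k ≠ 0 := by
  have h := poch_pos_ne_zero (1/2) one_half_pos k
  rwa [show ((1/2 : ℝ) : ℂ) = (1/2 : ℂ) by norm_num] at h

lemma poch_neg_ne_zero (m k : ℕ) (h : k ≤ m) : poch (-(m:ℂ)) k ≠ 0 := by
  unfold poch
  rw [Finset.prod_ne_zero_iff]
  intro i hi
  have hi' : i < m := lt_of_lt_of_le (Finset.mem_range.mp hi) h
  have he : (-(m:ℂ) + i) = (((i : ℤ) - m : ℤ) : ℂ) := by push_cast; ring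
  rw [he, Int.cast_ne_zero]
  omega

lemma poch_neg_eq_zero (m k : ℕ) (h : m < k) : poch (-(m:ℂ)) k = 0 := by
  unfold poch
  apply Finset.prod_eq_zero (Finset.mem_range.mpr h)
  simp

noncomputable def Tterm (x : ℂ) (n k : ℕ) : ℂ :=
  (poch (3*x) k * poch (1 - 3*x) k * poch (-(n : ℂ)) k) /
    ((Nat.factorial k : ℂ) * poch (1/2) k * poch (-(3*n : ℂ)) k) * (3/4 : ℂ)^k

noncomputable def Gterm (x : ℂ) (n : ℕ) : ℕ → ℂ
  | 0 => 0
  | (j+1) => (-(4/27) : ℂ) * (poch (3*x) (j+1) * poch (1-3*x) (j+1) * poch (-(n:ℂ)) j) /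
      ((Nat.factorial j : ℂ) * poch (1/2) j * poch (-(3*n : ℂ)) j) * (3/4 : ℂ)^(j+1)


set_option maxHeartbeats 1000000 in
lemma key_step (x : ℂ) (n : ℕ) (hn : 1 ≤ n) (k : ℕ) (hk : k ≤ n + 1) :
    (1/3 + (n:ℂ)) * (2/3 + (n:ℂ)) * Tterm x (n+1) k
      - (1/3 + x + (n:ℂ)) * (2/3 - x + (n:ℂ)) * Tterm x n k
      = Gterm x n (k+1) - Gterm x n k := by
  cases k with
  | zero =>
      simp only [Tterm, Gterm, poch_zero, poch_succ, Nat.factorial_zero, Nat.cast_zero,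
        Nat.cast_one, add_zero, pow_zero, pow_one]
      norm_num
      ring
  | succ j =>
      have hj : j ≤ n := by omega
      have hf : (Nat.factorial j : ℂ) ≠ 0 := by
        exact_mod_cast Nat.factorial_ne_zero j
      have hH : poch (1/2 : ℂ) j ≠ 0 := poch_half_ne_zero j
      have hQ : poch (-(3*(n:ℂ))) j ≠ 0 := by
        have h := poch_neg_ne_zero (3*n) j (by omega)
        rwa [show (((3*n : ℕ)) : ℂ) = 3*(n:ℂ) by push_cast; ring] at h
      have hjn : ((j:ℂ) - 3*(n:ℂ)) ≠ 0 := by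
        have he : ((j:ℂ) - 3*(n:ℂ)) = (((j : ℤ) - 3*n : ℤ) : ℂ) := by push_cast; ring
        rw [he, Int.cast_ne_zero]; omega
      have hjn1 : ((j:ℂ) - 3*(n:ℂ) - 1) ≠ 0 := by
        have he : ((j:ℂ) - 3*(n:ℂ) - 1) = (((j : ℤ) - 3*n - 1 : ℤ) : ℂ) := by push_cast; ring
        rw [he, Int.cast_ne_zero]; omega
      have hjn2 : ((j:ℂ) - 3*(n:ℂ) - 2) ≠ 0 := by
        have he : ((j:ℂ) - 3*(n:ℂ) - 2) = (((j : ℤ) - 3*n - 2 : ℤ) : ℂ) := by push_cast; ring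
        rw [he, Int.cast_ne_zero]; omega
      have ha1 : (-(3*(n:ℂ)) - 1) ≠ 0 := by
        have he : (-(3*(n:ℂ)) - 1) = (((-(3*(n:ℤ)) - 1 : ℤ)) : ℂ) := by push_cast; ring
        rw [he, Int.cast_ne_zero]; omega
      have ha2 : (-(3*(n:ℂ)) - 2) ≠ 0 := by
        have he : (-(3*(n:ℂ)) - 2) = (((-(3*(n:ℤ)) - 2 : ℤ)) : ℂ) := by push_cast; ring
        rw [he, Int.cast_ne_zero]; omega
      have ha3 : (-(3*(n:ℂ)) - 3) ≠ 0 := by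
        have he : (-(3*(n:ℂ)) - 3) = (((-(3*(n:ℤ)) - 3 : ℤ)) : ℂ) := by push_cast; ring
        rw [he, Int.cast_ne_zero]; omega
      have h12 : ((1/2 : ℂ) + (j:ℂ)) ≠ 0 := by
        have he : ((1/2 : ℂ) + (j:ℂ)) = (((1/2 + j : ℝ)) : ℂ) := by push_cast; ring
        rw [he]
        exact_mod_cast (by positivity : (1/2 + j : ℝ) ≠ 0)
      have hj1 : ((j:ℂ) + 1) ≠ 0 := Nat.cast_add_one_ne_zero j
      have hjn' : (-(3*(n:ℂ)) + (j:ℂ)) ≠ 0 := by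
        intro h; exact hjn (by linear_combination h)
      have hn1 : (-((n:ℂ)+1)) ≠ 0 := by
        intro h
        have : ((n:ℂ)+1) = 0 := by linear_combination -h
        exact Nat.cast_add_one_ne_zero n this
      have hN : poch (-(((n+1 : ℕ)) : ℂ)) (j+1) = -(((n+1 : ℕ)) : ℂ) * poch (-(n:ℂ)) j := by
        rw [poch_succ', show -(((n+1 : ℕ)) : ℂ) + 1 = -(n:ℂ) by push_cast; ring]
      have hT : Tterm x n (j+1) =
          (poch (3*x) j * poch (1-3*x) j * poch (-(n:ℂ)) j * (3/4:ℂ)^j /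
            ((Nat.factorial j : ℂ) * poch (1/2 : ℂ) j * poch (-(3*(n:ℂ))) j)) *
          ((3/4 : ℂ) * ((3*x+(j:ℂ)) * (1-3*x+(j:ℂ)) * ((j:ℂ)-(n:ℂ))) /
            (((j:ℂ)+1) * (1/2+(j:ℂ)) * ((j:ℂ)-3*(n:ℂ)))) := by
        simp only [Tterm, poch_succ]
        push_cast [Nat.factorial_succ]
        field_simp
        ring
      have hQQmul : poch (-(3 * (((n+1 : ℕ)) : ℂ))) (j+1) *
            (((j:ℂ)-3*(n:ℂ)) * (((j:ℂ)-3*(n:ℂ)-1) * ((j:ℂ)-3*(n:ℂ)-2)))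
          = (-(3*(n:ℂ))-1) * ((-(3*(n:ℂ))-1-1) * ((-(3*(n:ℂ))-1-1-1) *
              (poch (-(3*(n:ℂ))) j * ((j:ℂ)-3*(n:ℂ))))) := by
        rw [show -(3 * (((n+1 : ℕ)) : ℂ)) = -(3*(n:ℂ))-1-1-1 by push_cast; ring]
        have s0 := poch_succ (-(3*(n:ℂ))) j
        have s1 := poch_shift (-(3*(n:ℂ))) (j+1)
        have s2 := poch_shift (-(3*(n:ℂ))-1) (j+1)
        have s3 := poch_shift (-(3*(n:ℂ))-1-1) (j+1)
        push_cast at s1 s2 s3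
        linear_combination (((j:ℂ)-3*(n:ℂ)) * ((j:ℂ)-3*(n:ℂ)-1)) * s3
          + (((j:ℂ)-3*(n:ℂ)) * (-(3*(n:ℂ))-1-1-1)) * s2
          + ((-(3*(n:ℂ))-1-1-1) * (-(3*(n:ℂ))-1-1)) * s1
          + ((-(3*(n:ℂ))-1-1-1) * (-(3*(n:ℂ))-1-1) * (-(3*(n:ℂ))-1)) * s0
      have hQQdiv : poch (-(3 * (((n+1 : ℕ)) : ℂ))) (j+1)
          = (-(3*(n:ℂ))-1) * ((-(3*(n:ℂ))-1-1) * ((-(3*(n:ℂ))-1-1-1) * poch (-(3*(n:ℂ))) j)) /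
            (((j:ℂ)-3*(n:ℂ)-1) * ((j:ℂ)-3*(n:ℂ)-2)) := by
        rw [eq_div_iff (mul_ne_zero hjn1 hjn2)]
        apply mul_right_cancel₀ hjn
        linear_combination hQQmul
      have hT1 : Tterm x (n+1) (j+1) =
          (poch (3*x) j * poch (1-3*x) j * poch (-(n:ℂ)) j * (3/4:ℂ)^j /
            ((Nat.factorial j : ℂ) * poch (1/2 : ℂ) j * poch (-(3*(n:ℂ))) j)) *
          ((3/4 : ℂ) * ((3*x+(j:ℂ)) * (1-3*x+(j:ℂ)) * (-((n:ℂ)+1)) *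
              (((j:ℂ) - 3*(n:ℂ) - 1) * ((j:ℂ) - 3*(n:ℂ) - 2))) /
            (((j:ℂ)+1) * (1/2+(j:ℂ)) *
              ((-(3*(n:ℂ)) - 1) * ((-(3*(n:ℂ)) - 1-1) * (-(3*(n:ℂ)) - 1-1-1))))) := by
        simp only [Tterm]
        rw [hN, hQQdiv]
        simp only [poch_succ]
        push_cast [Nat.factorial_succ]
        have ha2' : (-(3*(n:ℂ)) - 1 - 1) ≠ 0 := by
          intro h; exact ha2 (by linear_combination h)
        have ha3' : (-(3*(n:ℂ)) - 1 - 1 - 1) ≠ 0 := by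
          intro h; exact ha3 (by linear_combination h)
        field_simp
        ring
      have hG1 : Gterm x n (j+1) =
          (poch (3*x) j * poch (1-3*x) j * poch (-(n:ℂ)) j * (3/4:ℂ)^j /
            ((Nat.factorial j : ℂ) * poch (1/2 : ℂ) j * poch (-(3*(n:ℂ))) j)) *
          ((3/4 : ℂ) * (-(4/27) : ℂ) * ((3*x+(j:ℂ)) * (1-3*x+(j:ℂ)))) := by
        simp only [Gterm, poch_succ]
        field_simp
        ring
      have hG2 : Gterm x n (j+1+1) =
          (poch (3*x) j * poch (1-3*x) j * poch (-(n:ℂ)) j * (3/4:ℂ)^j /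
            ((Nat.factorial j : ℂ) * poch (1/2 : ℂ) j * poch (-(3*(n:ℂ))) j)) *
          ((9/16 : ℂ) * (-(4/27) : ℂ) *
            ((3*x+(j:ℂ)) * (3*x+(j:ℂ)+1) * (1-3*x+(j:ℂ)) * (2-3*x+(j:ℂ)) * ((j:ℂ)-(n:ℂ))) /
            (((j:ℂ)+1) * (1/2+(j:ℂ)) * ((j:ℂ)-3*(n:ℂ)))) := by
        simp only [Gterm, poch_succ]
        push_cast [Nat.factorial_succ]
        field_simp
        ring
      have ha2' : (-(3*(n:ℂ)) - 1 - 1) ≠ 0 := by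
        intro h; exact ha2 (by linear_combination h)
      have ha3' : (-(3*(n:ℂ)) - 1 - 1 - 1) ≠ 0 := by
        intro h; exact ha3 (by linear_combination h)
      have hdT : (((j:ℂ)+1) * (1/2+(j:ℂ)) * ((j:ℂ)-3*(n:ℂ))) ≠ 0 :=
        mul_ne_zero (mul_ne_zero hj1 h12) hjn
      have hK : ((-(3*(n:ℂ)) - 1) * ((-(3*(n:ℂ)) - 1-1) * (-(3*(n:ℂ)) - 1-1-1))) ≠ 0 :=
        mul_ne_zero ha1 (mul_ne_zero ha2' ha3')
      have hdT1 : (((j:ℂ)+1) * (1/2+(j:ℂ)) *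
          ((-(3*(n:ℂ)) - 1) * ((-(3*(n:ℂ)) - 1-1) * (-(3*(n:ℂ)) - 1-1-1)))) ≠ 0 :=
        mul_ne_zero (mul_ne_zero hj1 h12) hK
      have hTm : Tterm x n (j+1) * (((j:ℂ)+1) * (1/2+(j:ℂ)) * ((j:ℂ)-3*(n:ℂ))) =
          (poch (3*x) j * poch (1-3*x) j * poch (-(n:ℂ)) j * (3/4:ℂ)^j /
            ((Nat.factorial j : ℂ) * poch (1/2 : ℂ) j * poch (-(3*(n:ℂ))) j)) *
          ((3/4 : ℂ) * ((3*x+(j:ℂ)) * (1-3*x+(j:ℂ)) * ((j:ℂ)-(n:ℂ)))) := by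
        rw [hT, mul_assoc, div_mul_cancel₀ _ hdT]
      have hT1m : Tterm x (n+1) (j+1) * (((j:ℂ)+1) * (1/2+(j:ℂ)) *
            ((-(3*(n:ℂ)) - 1) * ((-(3*(n:ℂ)) - 1-1) * (-(3*(n:ℂ)) - 1-1-1)))) =
          (poch (3*x) j * poch (1-3*x) j * poch (-(n:ℂ)) j * (3/4:ℂ)^j /
            ((Nat.factorial j : ℂ) * poch (1/2 : ℂ) j * poch (-(3*(n:ℂ))) j)) *
          ((3/4 : ℂ) * ((3*x+(j:ℂ)) * (1-3*x+(j:ℂ)) * (-((n:ℂ)+1)) *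
              (((j:ℂ) - 3*(n:ℂ) - 1) * ((j:ℂ) - 3*(n:ℂ) - 2)))) := by
        rw [hT1, mul_assoc, div_mul_cancel₀ _ hdT1]
      have hG2m : Gterm x n (j+1+1) * (((j:ℂ)+1) * (1/2+(j:ℂ)) * ((j:ℂ)-3*(n:ℂ))) =
          (poch (3*x) j * poch (1-3*x) j * poch (-(n:ℂ)) j * (3/4:ℂ)^j /
            ((Nat.factorial j : ℂ) * poch (1/2 : ℂ) j * poch (-(3*(n:ℂ))) j)) *
          ((9/16 : ℂ) * (-(4/27) : ℂ) *
            ((3*x+(j:ℂ)) * (3*x+(j:ℂ)+1) * (1-3*x+(j:ℂ)) * (2-3*x+(j:ℂ)) * ((j:ℂ)-(n:ℂ)))) := by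
        rw [hG2, mul_assoc, div_mul_cancel₀ _ hdT]
      apply mul_right_cancel₀ (mul_ne_zero hdT hK)
      linear_combination
        ((1/3 + (n:ℂ)) * (2/3 + (n:ℂ)) * ((j:ℂ)-3*(n:ℂ))) * hT1m
        - ((1/3 + x + (n:ℂ)) * (2/3 - x + (n:ℂ)) *
            ((-(3*(n:ℂ)) - 1) * ((-(3*(n:ℂ)) - 1-1) * (-(3*(n:ℂ)) - 1-1-1)))) * hTm
        - ((-(3*(n:ℂ)) - 1) * ((-(3*(n:ℂ)) - 1-1) * (-(3*(n:ℂ)) - 1-1-1))) * hG2m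
        + ((((j:ℂ)+1) * (1/2+(j:ℂ)) * ((j:ℂ)-3*(n:ℂ))) *
            ((-(3*(n:ℂ)) - 1) * ((-(3*(n:ℂ)) - 1-1) * (-(3*(n:ℂ)) - 1-1-1)))) * hG1

lemma Gterm_zero (x : ℂ) (n : ℕ) : Gterm x n 0 = 0 := rfl

lemma Tterm_top (x : ℂ) (n : ℕ) : Tterm x n (n+1) = 0 := by
  simp [Tterm, poch_neg_eq_zero n (n+1) (Nat.lt_succ_self n)]

lemma Gterm_top (x : ℂ) (n : ℕ) : Gterm x n (n+1+1) = 0 := by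
  simp [Gterm, poch_neg_eq_zero n (n+1) (Nat.lt_succ_self n)]

lemma key (x : ℂ) (n : ℕ) (hn : 1 ≤ n) :
    (1/3 + (n:ℂ)) * (2/3 + (n:ℂ)) * ∑ k ∈ Finset.range (n+2), Tterm x (n+1) k
      = (1/3 + x + (n:ℂ)) * (2/3 - x + (n:ℂ)) * ∑ k ∈ Finset.range (n+1), Tterm x n k := by
  have htel : ∑ k ∈ Finset.range (n+2), (Gterm x n (k+1) - Gterm x n k)
      = Gterm x n (n+2) - Gterm x n 0 := Finset.sum_range_sub (Gterm x n) (n+2)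
  have hsum : ∑ k ∈ Finset.range (n+2),
      ((1/3 + (n:ℂ)) * (2/3 + (n:ℂ)) * Tterm x (n+1) k
        - (1/3 + x + (n:ℂ)) * (2/3 - x + (n:ℂ)) * Tterm x n k) = 0 := by
    rw [Finset.sum_congr rfl (fun k hk => key_step x n hn k (by
      have := Finset.mem_range.mp hk; omega))]
    rw [htel, show n+2 = n+1+1 from rfl, Gterm_top, Gterm_zero, sub_zero]
  rw [Finset.sum_sub_distrib, ← Finset.mul_sum, ← Finset.mul_sum, sub_eq_zero] at hsum
  rw [hsum, show n+2 = n+1+1 from rfl, Finset.sum_range_succ, Tterm_top, add_zero]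

noncomputable def Rhs (x : ℂ) (n : ℕ) : ℂ :=
  (poch (1/3 + x) n * poch (2/3 - x) n) / (poch (1/3) n * poch (2/3) n)

lemma poch_third_ne_zero (k : ℕ) : poch (1/3 : ℂ) k ≠ 0 := by
  have h := poch_pos_ne_zero (1/3) (by norm_num) k
  rwa [show ((1/3 : ℝ) : ℂ) = (1/3 : ℂ) by norm_num] at h

lemma poch_twothird_ne_zero (k : ℕ) : poch (2/3 : ℂ) k ≠ 0 := by
  have h := poch_pos_ne_zero (2/3) (by norm_num) k
  rwa [show ((2/3 : ℝ) : ℂ) = (2/3 : ℂ) by norm_num] at h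

lemma third_n_ne_zero (n : ℕ) : (1/3 + (n:ℂ)) ≠ 0 := by
  have he : (1/3 + (n:ℂ)) = (((1/3 + n : ℝ)) : ℂ) := by push_cast; ring
  rw [he]
  exact_mod_cast (by positivity : (1/3 + n : ℝ) ≠ 0)

lemma twothird_n_ne_zero (n : ℕ) : (2/3 + (n:ℂ)) ≠ 0 := by
  have he : (2/3 + (n:ℂ)) = (((2/3 + n : ℝ)) : ℂ) := by push_cast; ring
  rw [he]
  exact_mod_cast (by positivity : (2/3 + n : ℝ) ≠ 0)

lemma rhs_rec (x : ℂ) (n : ℕ) :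
    (1/3 + (n:ℂ)) * (2/3 + (n:ℂ)) * Rhs x (n+1)
      = (1/3 + x + (n:ℂ)) * (2/3 - x + (n:ℂ)) * Rhs x n := by
  have h13 := poch_third_ne_zero n
  have h23 := poch_twothird_ne_zero n
  have h13n := third_n_ne_zero n
  have h23n := twothird_n_ne_zero n
  simp only [Rhs, poch_succ]
  rw [← mul_div_assoc, ← mul_div_assoc,
    div_eq_div_iff
      (mul_ne_zero (mul_ne_zero h13 h13n) (mul_ne_zero h23 h23n))
      (mul_ne_zero h13 h23)]
  ring

lemma aux_main (x : ℂ) (n : ℕ) :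
    ∑ k ∈ Finset.range (n+1), Tterm x n k = Rhs x n := by
  induction n with
  | zero => simp [Tterm, Rhs, poch_zero]
  | succ m ih =>
    rcases Nat.eq_zero_or_pos m with hm | hm
    · subst hm
      rw [Finset.sum_range_succ, Finset.sum_range_one]
      simp only [Tterm, Rhs, poch_succ, poch_zero]
      norm_num
      field_simp
      ring
    · have hkey := key x m hm
      rw [show m+2 = m+1+1 from rfl] at hkey
      rw [ih] at hkey
      rw [← rhs_rec x m] at hkey
      exact mul_left_cancel₀
        (mul_ne_zero (third_n_ne_zero m) (twothird_n_ne_zero m)) hkey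

theorem gosper_first_3F2 (n : ℕ) (x : ℂ)
    (hden : ∀ k ≤ n, poch (1/2) k ≠ 0 ∧ poch (-(3*n : ℂ)) k ≠ 0)
    (h13 : poch (1/3) n ≠ 0) (h23 : poch (2/3) n ≠ 0) :
    ∑ k ∈ Finset.range (n+1),
      (poch (3*x) k * poch (1 - 3*x) k * poch (-(n : ℂ)) k) /
        ((Nat.factorial k : ℂ) * poch (1/2) k * poch (-(3*n : ℂ)) k) * (3/4 : ℂ)^k
      = (poch (1/3 + x) n * poch (2/3 - x) n) / (poch (1/3) n * poch (2/3) n) := by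
  have h := aux_main x n
  simp only [Tterm, Rhs] at h
  exact h
end

section
/- For every nonnegative integer n and complex numbers q, x with 0 < |q| < 1 (or q not a root of unity) such that no denominator vanishes, the sum over k from 0 to n of (q^{-3n}; q^3)_k * (x;q)_k (q/x;q)_k / ((q;q)_k (-q;q)_k (q^{1/2};q)_k (-q^{1/2};q)_k (q^{-3n};q)_k) * q^k equals ((qx; q^3)_n (q^2/x; q^3)_n) / ((q; q^3)_n (q^2; q^3)_n). (q-analogue of Gosper's first identity, due to Chu.) -/
set_option maxHeartbeats 4000000

/-- q-Pochhammer symbol `(a; q)_k`. -/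
noncomputable def qpoch (a q : ℂ) (k : ℕ) : ℂ := ∏ j ∈ Finset.range k, (1 - a * q ^ j)

lemma qpoch_succ (a q : ℂ) (k : ℕ) :
    qpoch a q (k+1) = qpoch a q k * (1 - a * q ^ k) := Finset.prod_range_succ _ _

lemma qpoch_succ' (a q : ℂ) (k : ℕ) :
    qpoch a q (k+1) = (1 - a) * qpoch (a*q) q k := by
  rw [qpoch, Finset.prod_range_succ']
  simp [qpoch, mul_comm, mul_assoc, pow_succ, mul_left_comm]

lemma qpoch_shift (a q : ℂ) (k : ℕ) :
    (1 - a) * qpoch (a*q) q k = qpoch a q k * (1 - a * q ^ k) := by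
  rw [← qpoch_succ', qpoch_succ]

lemma qpoch_ne_zero {a q : ℂ} {k : ℕ} (h : ∀ j < k, 1 - a * q ^ j ≠ 0) :
    qpoch a q k ≠ 0 := by
  rw [qpoch, Finset.prod_ne_zero_iff]
  intro j hj; exact h j (Finset.mem_range.mp hj)

lemma hlp1 {s : ℂ} (hs : ‖s‖ < 1) {w : ℂ} {m : ℕ} (hm : m ≠ 0)
    (he : w = s^m) : 1 - w ≠ 0 := by
  subst he; intro h
  have h1 : s^m = 1 := by linear_combination -h
  have h2 : ‖s^m‖ = 1 := by rw [h1]; simp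
  rw [norm_pow] at h2
  exact absurd h2 (ne_of_lt (pow_lt_one₀ (norm_nonneg s) hs hm))

lemma hlp2 {s : ℂ} (hs : ‖s‖ < 1) {w : ℂ} {m : ℕ} (hm : m ≠ 0)
    (he : w = s^m) : 1 + w ≠ 0 := by
  subst he; intro h
  have h1 : s^m = -1 := by linear_combination h
  have h2 : ‖s^m‖ = 1 := by rw [h1]; simp
  rw [norm_pow] at h2
  exact absurd h2 (ne_of_lt (pow_lt_one₀ (norm_nonneg s) hs hm))

lemma hlp3 {w : ℂ} (h0 : w ≠ 0) (h1 : ‖w‖ < 1) {u : ℂ} {t : ℤ}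
    (ht : t < 0) (he : u = w^t) : 1 - u ≠ 0 := by
  subst he; intro h
  have h1' : w^t = 1 := by linear_combination -h
  have habs : ‖w^t‖ = 1 := by rw [h1']; simp
  rw [norm_zpow] at habs
  have hpos : 0 < ‖w‖ := norm_pos_iff.mpr h0
  have h3 := one_lt_zpow_of_neg₀ hpos h1 ht
  rw [habs] at h3
  exact lt_irrefl 1 h3

lemma cert (q x K M : ℂ)
    (hq : q ≠ 0) (hx : x ≠ 0) (hK : K ≠ 0)
    (h1 : 1 - q*K^2 ≠ 0) (h2 : 1 - q^2*K^2 ≠ 0)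
    (h3 : 1 - K*M ≠ 0) (h4 : 1 - q*(K*M) ≠ 0) (h5 : 1 - q^2*(K*M) ≠ 0)
    (h7 : q*M - 1 ≠ 0) (h8 : q^2*M - 1 ≠ 0) :
    1 - ((q^2*M - x)*(q*M*x - 1)/((q^2*M - 1)*((q*M - 1)*x)))
        * ((1-K^3*M)*((1-q*M)*(1-q^2*M))/((1-K*M)*((1-q*(K*M))*(1-q^2*(K*M)))))
    = (-M*((q*K)^2-1)*((q*K)^2-q)/((q*K)*((1-q*(K*M))*(1-q^2*(K*M)))))
        * (q*(1-K^3*M)*((1-x*K)*(1-q*K/x))/((1-q*K^2)*((1-q^2*K^2)*(1-K*M))))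
      - (-M*(K^2-1)*(K^2-q)/(K*((1-K*M)*(1-q*(K*M))))) := by
  have d1 : (q^2*M - 1)*((q*M - 1)*x) ≠ 0 := mul_ne_zero h8 (mul_ne_zero h7 hx)
  have d2 : (1-K*M)*((1-q*(K*M))*(1-q^2*(K*M))) ≠ 0 :=
    mul_ne_zero h3 (mul_ne_zero h4 h5)
  have dL : (q^2*M - 1)*((q*M - 1)*x) * ((1-K*M)*((1-q*(K*M))*(1-q^2*(K*M)))) ≠ 0 :=
    mul_ne_zero d1 d2
  have d3 : (q*K)*((1-q*(K*M))*(1-q^2*(K*M))) ≠ 0 :=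
    mul_ne_zero (mul_ne_zero hq hK) (mul_ne_zero h4 h5)
  have d4 : (1-q*K^2)*((1-q^2*K^2)*(1-K*M)) ≠ 0 :=
    mul_ne_zero h1 (mul_ne_zero h2 h3)
  have d34 : (q*K)*((1-q*(K*M))*(1-q^2*(K*M))) * ((1-q*K^2)*((1-q^2*K^2)*(1-K*M))) ≠ 0 :=
    mul_ne_zero d3 d4
  have d5 : K*((1-K*M)*(1-q*(K*M))) ≠ 0 := mul_ne_zero hK (mul_ne_zero h3 h4)
  rw [div_mul_div_comm, div_mul_div_comm, one_sub_div dL, div_sub_div _ _ d34 d5,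
    div_eq_div_iff dL (mul_ne_zero d34 d5)]
  field_simp
  ring

lemma step_abs (q x K M P1 P2 P3 D Q5 P1' Q5' r : ℂ)
    (hq : q ≠ 0) (hx : x ≠ 0) (hK : K ≠ 0)
    (h1 : 1 - q*K^2 ≠ 0) (h2 : 1 - q^2*K^2 ≠ 0)
    (h3 : 1 - K*M ≠ 0) (h4 : 1 - q*(K*M) ≠ 0) (h5 : 1 - q^2*(K*M) ≠ 0)
    (h6 : 1 - M ≠ 0) (h7 : 1 - q*M ≠ 0) (h8 : 1 - q^2*M ≠ 0)
    (hD : D ≠ 0) (hQ5 : Q5 ≠ 0)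
    (hP1' : (1-M) * P1' = P1 * (1 - K^3*M))
    (hQ5' : ((1-M)*((1-q*M)*(1-q^2*M))) * Q5' =
      Q5 * ((1-K*M)*((1-q*(K*M))*(1-q^2*(K*M)))))
    (hr : r * ((q^2*M - 1)*((q*M - 1)*x)) = (q^2*M - x)*(q*M*x - 1)) :
    P1*(P2*P3)/(D*Q5)*K - r * (P1'*(P2*P3)/(D*Q5')*K)
    = (-M*((q*K)^2-1)*((q*K)^2-q)/((q*K)*((1-q*(K*M))*(1-q^2*(K*M)))))
        * ((P1*(1-K^3*M))*((P2*(1-x*K))*(P3*(1-q*K/x)))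
            /((D*((1-q*K^2)*(1-q^2*K^2)))*(Q5*(1-K*M)))*(q*K))
      - (-M*(K^2-1)*(K^2-q)/(K*((1-K*M)*(1-q*(K*M)))))*(P1*(P2*P3)/(D*Q5)*K) := by
  have h7' : q*M - 1 ≠ 0 := fun h => h7 (by linear_combination -h)
  have h8' : q^2*M - 1 ≠ 0 := fun h => h8 (by linear_combination -h)
  have dL : (q^2*M - 1)*((q*M - 1)*x) ≠ 0 := mul_ne_zero h8' (mul_ne_zero h7' hx)
  have hreq : r = (q^2*M - x)*(q*M*x - 1)/((q^2*M - 1)*((q*M - 1)*x)) := by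
    rw [eq_div_iff dL]; exact hr
  have hE : (1-M)*((1-q*M)*(1-q^2*M)) ≠ 0 := mul_ne_zero h6 (mul_ne_zero h7 h8)
  have hF : (1-K*M)*((1-q*(K*M))*(1-q^2*(K*M))) ≠ 0 :=
    mul_ne_zero h3 (mul_ne_zero h4 h5)
  have hQ5'ne : Q5' ≠ 0 := by
    intro h
    exact (mul_ne_zero hQ5 hF)
      (by linear_combination -hQ5' + (((1-M)*((1-q*M)*(1-q^2*M)))) * h)
  have hP1'eq : P1' = P1 * (1 - K^3*M) / ((1-M)) := by
    rw [eq_div_iff h6]; linear_combination hP1'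
  have hQ5'eq : Q5' = Q5 * ((1-K*M)*((1-q*(K*M))*(1-q^2*(K*M))))
      / ((1-M)*((1-q*M)*(1-q^2*M))) := by
    rw [eq_div_iff hE]; linear_combination hQ5'
  have hA : P1'*(P2*P3)/(D*Q5')*K
      = P1*(P2*P3)/(D*Q5)*K
        * ((1-K^3*M)*((1-q*M)*(1-q^2*M))/((1-K*M)*((1-q*(K*M))*(1-q^2*(K*M))))) := by
    rw [hP1'eq, hQ5'eq]
    field_simp
  have hB : (P1*(1-K^3*M))*((P2*(1-x*K))*(P3*(1-q*K/x)))
        /((D*((1-q*K^2)*(1-q^2*K^2)))*(Q5*(1-K*M)))*(q*K)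
      = P1*(P2*P3)/(D*Q5)*K
        * (q*(1-K^3*M)*((1-x*K)*(1-q*K/x))/((1-q*K^2)*((1-q^2*K^2)*(1-K*M)))) := by
    rw [div_mul_eq_mul_div, div_mul_eq_mul_div, ← mul_div_assoc, div_mul_eq_mul_div, div_div,
      div_eq_div_iff (mul_ne_zero (mul_ne_zero hD (mul_ne_zero h1 h2)) (mul_ne_zero hQ5 h3))
        (mul_ne_zero (mul_ne_zero hD hQ5) (mul_ne_zero h1 (mul_ne_zero h2 h3)))]
    ring
  rw [hreq, hA, hB]
  linear_combination (P1*(P2*P3)/(D*Q5)*K) *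
    cert q x K M hq hx hK h1 h2 h3 h4 h5 h7' h8'

lemma cbound (q K M T : ℂ) (hK : K ≠ 0) (h3 : 1 - K*M ≠ 0) (h4 : 1 - q*(K*M) ≠ 0)
    (hKM : K^3*M = 1) :
    -M*(K^2-1)*(K^2-q)/(K*((1-K*M)*(1-q*(K*M)))) * T = -T := by
  have h : -M*(K^2-1)*(K^2-q)/(K*((1-K*M)*(1-q*(K*M)))) = -1 := by
    rw [div_eq_iff (mul_ne_zero hK (mul_ne_zero h3 h4))]
    linear_combination (q*M - K) * hKM
  rw [h]; ring

lemma rhs_abs (q x W A B C E : ℂ) (hx : x ≠ 0) (hC : C ≠ 0) (hE : E ≠ 0)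
    (h9 : 1 - q*W ≠ 0) (h10 : 1 - q^2*W ≠ 0) :
    (1 - q*x*W)*(1 - q^2/x*W)/((1 - q*W)*(1 - q^2*W)) * (A*B/(C*E))
    = (A*(1 - q*x*W))*(B*(1 - q^2/x*W))/((C*(1 - q*W))*(E*(1 - q^2*W))) := by
  rw [div_mul_div_comm,
    div_eq_div_iff (mul_ne_zero (mul_ne_zero h9 h10) (mul_ne_zero hC hE))
      (mul_ne_zero (mul_ne_zero hC h9) (mul_ne_zero hE h10))]
  ring

theorem aux (s x : ℂ) (hs0 : s ≠ 0) (habs : ‖s‖ < 1) (hx : x ≠ 0) :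
    ∀ n : ℕ, ∑ k ∈ Finset.range (n+1),
      qpoch ((s^2) ^ (-(3*(n:ℤ)))) ((s^2)^3) k * (qpoch x (s^2) k * qpoch ((s^2)/x) (s^2) k) /
        (qpoch (s^2) (s^2) k * qpoch (-(s^2)) (s^2) k * qpoch s (s^2) k * qpoch (-s) (s^2) k *
          qpoch ((s^2) ^ (-(3*(n:ℤ)))) (s^2) k) * (s^2)^k
      = (qpoch ((s^2)*x) ((s^2)^3) n * qpoch ((s^2)^2/x) ((s^2)^3) n) /
          (qpoch (s^2) ((s^2)^3) n * qpoch ((s^2)^2) ((s^2)^3) n) := by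
  have h20 : (s:ℂ)^2 ≠ 0 := pow_ne_zero 2 hs0
  have habs2 : ‖(s:ℂ)^2‖ < 1 := by
    rw [norm_pow]; exact pow_lt_one₀ (norm_nonneg s) habs (by norm_num)
  intro n
  induction n with
  | zero => simp [qpoch]
  | succ n ih =>
    push_cast
    set M := (s^2 : ℂ) ^ (-(3*((n:ℤ)+1))) with hMdef
    have hM' : ∀ a : ℕ, ((s:ℂ)^2)^a * M = ((s:ℂ)^2)^((a:ℤ) - (3*(n:ℤ)+3)) := by
      intro a
      rw [hMdef, ← zpow_natCast ((s:ℂ)^2) a, ← zpow_add₀ h20,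
        show ((a:ℤ) + -(3*((n:ℤ)+1))) = ((a:ℤ) - (3*(n:ℤ)+3)) from by push_cast; ring]
    have hM0 : ((s:ℂ)^2) ^ (-(3*(n:ℤ))) = M * ((s:ℂ)^2)^3 := by
      rw [hMdef, ← zpow_natCast ((s:ℂ)^2) 3, ← zpow_add₀ h20,
        show (-(3*((n:ℤ)+1)) + ((3:ℕ):ℤ)) = -(3*(n:ℤ)) from by push_cast; ring]
    rw [hM0] at ih
    have hMW : M * ((((s:ℂ)^2)^3)^n * ((s:ℂ)^2)^3) = 1 := by
      rw [hMdef, show ((((s:ℂ)^2)^3)^n * ((s:ℂ)^2)^3) = ((s:ℂ)^2)^(3*n+3) from by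
          rw [← pow_mul, ← pow_add],
        ← zpow_natCast ((s:ℂ)^2) (3*n+3), ← zpow_add₀ h20,
        show (-(3*((n:ℤ)+1)) + ((3*n+3:ℕ):ℤ)) = 0 from by push_cast; ring, zpow_zero]
    have h9 : 1 - (s:ℂ)^2*(((s:ℂ)^2)^3)^n ≠ 0 :=
      hlp1 habs (show 6*n+2 ≠ 0 by omega) (by ring)
    have h10 : 1 - ((s:ℂ)^2)^2*(((s:ℂ)^2)^3)^n ≠ 0 :=
      hlp1 habs (show 6*n+4 ≠ 0 by omega) (by ring)
    have hC : qpoch ((s:ℂ)^2) (((s:ℂ)^2)^3) n ≠ 0 :=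
      qpoch_ne_zero fun j _ => hlp1 habs (show 6*j+2 ≠ 0 by omega) (by ring)
    have hE : qpoch (((s:ℂ)^2)^2) (((s:ℂ)^2)^3) n ≠ 0 :=
      qpoch_ne_zero fun j _ => hlp1 habs (show 6*j+4 ≠ 0 by omega) (by ring)
    set r : ℂ := (1 - s^2*x*((s^2)^3)^n)*(1 - (s^2)^2/x*((s^2)^3)^n)
        /((1 - s^2*((s^2)^3)^n)*(1 - (s^2)^2*((s^2)^3)^n)) with hrdef
    have hr : r * (((s^2)^2*M - 1)*((s^2*M - 1)*x)) = ((s^2)^2*M - x)*(s^2*M*x - 1) := by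
      have e : (1 - ((s:ℂ)^2)^2/x*(((s:ℂ)^2)^3)^n) * x
          = x - ((s:ℂ)^2)^2*(((s:ℂ)^2)^3)^n := by
        field_simp
      rw [hrdef, div_mul_eq_mul_div, div_eq_iff (mul_ne_zero h9 h10)]
      linear_combination (-(s^2)*(M - ((s^2)^3)^n)*(x-1)*(x-s^2)) * hMW
        + ((1-s^2*M)*(1-(s^2)^2*M)*(1 - s^2*x*((s^2)^3)^n)) * e
    set G : ℕ → ℂ := fun j =>
      -M*(((s^2)^j)^2-1)*(((s^2)^j)^2-s^2)/(((s^2)^j)*((1-((s^2)^j)*M)*(1-s^2*(((s^2)^j)*M))))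
        * (qpoch M ((s^2)^3) j * (qpoch x (s^2) j * qpoch ((s^2)/x) (s^2) j) /
            (qpoch (s^2) (s^2) j * qpoch (-(s^2)) (s^2) j * qpoch s (s^2) j * qpoch (-s) (s^2) j *
              qpoch M (s^2) j) * (s^2)^j) with hGdef
    have key : ∀ k ∈ Finset.range (n+1),
        qpoch M ((s^2)^3) k * (qpoch x (s^2) k * qpoch ((s^2)/x) (s^2) k) /
          (qpoch (s^2) (s^2) k * qpoch (-(s^2)) (s^2) k * qpoch s (s^2) k * qpoch (-s) (s^2) k *
            qpoch M (s^2) k) * (s^2)^k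
        = r * (qpoch (M*(s^2)^3) ((s^2)^3) k * (qpoch x (s^2) k * qpoch ((s^2)/x) (s^2) k) /
            (qpoch (s^2) (s^2) k * qpoch (-(s^2)) (s^2) k * qpoch s (s^2) k * qpoch (-s) (s^2) k *
              qpoch (M*(s^2)^3) (s^2) k) * (s^2)^k) + (G (k+1) - G k) := by
      intro k hk
      have hkn : k ≤ n := Nat.lt_succ_iff.mp (Finset.mem_range.mp hk)
      have hK : ((s:ℂ)^2)^k ≠ 0 := pow_ne_zero k h20
      have h1 : 1 - (s:ℂ)^2*(((s:ℂ)^2)^k)^2 ≠ 0 :=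
        hlp1 habs (show 4*k+2 ≠ 0 by omega) (by ring)
      have h2 : 1 - ((s:ℂ)^2)^2*(((s:ℂ)^2)^k)^2 ≠ 0 :=
        hlp1 habs (show 4*k+4 ≠ 0 by omega) (by ring)
      have h3 : 1 - ((s:ℂ)^2)^k*M ≠ 0 := by
        rw [hM' k]; exact hlp3 h20 habs2 (by omega) rfl
      have h4 : 1 - (s:ℂ)^2*(((s:ℂ)^2)^k*M) ≠ 0 := by
        rw [show ((s:ℂ)^2)*(((s:ℂ)^2)^k*M) = ((s:ℂ)^2)^(k+1)*M from by ring, hM' (k+1)]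
        exact hlp3 h20 habs2 (by omega) rfl
      have h5 : 1 - ((s:ℂ)^2)^2*(((s:ℂ)^2)^k*M) ≠ 0 := by
        rw [show (((s:ℂ)^2))^2*(((s:ℂ)^2)^k*M) = ((s:ℂ)^2)^(k+2)*M from by ring, hM' (k+2)]
        exact hlp3 h20 habs2 (by omega) rfl
      have h6 : 1 - M ≠ 0 := by
        have e := hM' 0
        rw [pow_zero, one_mul] at e
        rw [e]; exact hlp3 h20 habs2 (by omega) rfl
      have h7 : 1 - (s:ℂ)^2*M ≠ 0 := by
        have e := hM' 1
        rw [pow_one] at e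
        rw [e]; exact hlp3 h20 habs2 (by omega) rfl
      have h8 : 1 - ((s:ℂ)^2)^2*M ≠ 0 := by
        rw [hM' 2]; exact hlp3 h20 habs2 (by omega) rfl
      have hqp1 : qpoch ((s:ℂ)^2) ((s:ℂ)^2) k ≠ 0 :=
        qpoch_ne_zero fun j _ => hlp1 habs (show 2*j+2 ≠ 0 by omega) (by ring)
      have hqp2 : qpoch (-((s:ℂ)^2)) ((s:ℂ)^2) k ≠ 0 := by
        refine qpoch_ne_zero fun j _ => ?_
        rw [show (1:ℂ) - (-(s^2))*((s^2))^j = 1 + s^(2*j+2) from by ring]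
        exact hlp2 habs (show 2*j+2 ≠ 0 by omega) rfl
      have hqp3 : qpoch s ((s:ℂ)^2) k ≠ 0 :=
        qpoch_ne_zero fun j _ => hlp1 habs (show 2*j+1 ≠ 0 by omega) (by ring)
      have hqp4 : qpoch (-s) ((s:ℂ)^2) k ≠ 0 := by
        refine qpoch_ne_zero fun j _ => ?_
        rw [show (1:ℂ) - (-s)*((s^2))^j = 1 + s^(2*j+1) from by ring]
        exact hlp2 habs (show 2*j+1 ≠ 0 by omega) rfl
      have hD : qpoch ((s:ℂ)^2) ((s:ℂ)^2) k * qpoch (-((s:ℂ)^2)) ((s:ℂ)^2) k *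
          qpoch s ((s:ℂ)^2) k * qpoch (-s) ((s:ℂ)^2) k ≠ 0 :=
        mul_ne_zero (mul_ne_zero (mul_ne_zero hqp1 hqp2) hqp3) hqp4
      have hQ5 : qpoch M ((s:ℂ)^2) k ≠ 0 := by
        refine qpoch_ne_zero fun j hj => ?_
        rw [show (1:ℂ) - M*((s^2))^j = 1 - ((s:ℂ)^2)^j*M from by ring, hM' j]
        exact hlp3 h20 habs2 (by omega) rfl
      have hP1' : (1-M) * qpoch (M*(s^2)^3) ((s^2)^3) k
          = qpoch M ((s^2)^3) k * (1 - (((s:ℂ)^2)^k)^3*M) := by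
        have h := qpoch_shift M (((s:ℂ)^2)^3) k
        rw [pow_right_comm ((s:ℂ)^2) 3 k] at h
        linear_combination h
      have hQ5' : ((1-M)*((1-(s:ℂ)^2*M)*(1-((s:ℂ)^2)^2*M))) * qpoch (M*(s^2)^3) ((s:ℂ)^2) k
          = qpoch M ((s:ℂ)^2) k * ((1-((s:ℂ)^2)^k*M)*((1-(s:ℂ)^2*(((s:ℂ)^2)^k*M))
              *(1-((s:ℂ)^2)^2*(((s:ℂ)^2)^k*M)))) := by
        have e1 := qpoch_shift M ((s:ℂ)^2) k
        have e2 := qpoch_shift (M*((s:ℂ)^2)) ((s:ℂ)^2) k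
        have e3 := qpoch_shift (M*((s:ℂ)^2)*((s:ℂ)^2)) ((s:ℂ)^2) k
        rw [show M*((s:ℂ)^2)*((s:ℂ)^2)*((s:ℂ)^2) = M*((s:ℂ)^2)^3 from by ring] at e3
        linear_combination ((1-(s:ℂ)^2*(((s:ℂ)^2)^k*M))*(1-((s:ℂ)^2)^2*(((s:ℂ)^2)^k*M))) * e1
          + ((1-M)*(1-((s:ℂ)^2)^2*(((s:ℂ)^2)^k*M))) * e2 + ((1-M)*(1-(s:ℂ)^2*M)) * e3
      have hstep := step_abs ((s:ℂ)^2) x (((s:ℂ)^2)^k) M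
        (qpoch M ((s^2)^3) k) (qpoch x (s^2) k) (qpoch ((s^2)/x) (s^2) k)
        (qpoch (s^2) (s^2) k * qpoch (-(s^2)) (s^2) k * qpoch s (s^2) k * qpoch (-s) (s^2) k)
        (qpoch M (s^2) k) (qpoch (M*(s^2)^3) ((s^2)^3) k) (qpoch (M*(s^2)^3) (s^2) k) r
        h20 hx hK h1 h2 h3 h4 h5 h6 h7 h8 hD hQ5 hP1' hQ5' hr
      simp only [hGdef]
      simp only [qpoch_succ]
      linear_combination hstep
    have hKM : (((s:ℂ)^2)^(n+1))^3 * M = 1 := by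
      rw [hMdef, ← pow_mul, ← zpow_natCast ((s:ℂ)^2) ((n+1)*3), ← zpow_add₀ h20,
        show ((((n+1)*3:ℕ)):ℤ) + (-(3*((n:ℤ)+1))) = 0 from by push_cast; ring, zpow_zero]
    have h3b : 1 - ((s:ℂ)^2)^(n+1)*M ≠ 0 := by
      rw [hM' (n+1)]; exact hlp3 h20 habs2 (by omega) rfl
    have h4b : 1 - (s:ℂ)^2*(((s:ℂ)^2)^(n+1)*M) ≠ 0 := by
      rw [show ((s:ℂ)^2)*(((s:ℂ)^2)^(n+1)*M) = ((s:ℂ)^2)^(n+2)*M from by ring, hM' (n+2)]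
      exact hlp3 h20 habs2 (by omega) rfl
    have hG0 : G 0 = 0 := by
      simp only [hGdef]; norm_num
    have hGn1 : G (n+1) = -(qpoch M ((s^2)^3) (n+1) *
        (qpoch x (s^2) (n+1) * qpoch ((s^2)/x) (s^2) (n+1)) /
        (qpoch (s^2) (s^2) (n+1) * qpoch (-(s^2)) (s^2) (n+1) * qpoch s (s^2) (n+1) *
          qpoch (-s) (s^2) (n+1) * qpoch M (s^2) (n+1)) * (s^2)^(n+1)) := by
      simp only [hGdef]
      exact cbound ((s:ℂ)^2) (((s:ℂ)^2)^(n+1)) M _ (pow_ne_zero _ h20) h3b h4b hKM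
    rw [Finset.sum_range_succ, Finset.sum_congr rfl key, Finset.sum_add_distrib,
      ← Finset.mul_sum, Finset.sum_range_sub, ih, hG0, hGn1, hrdef]
    simp only [qpoch_succ]
    linear_combination rhs_abs ((s:ℂ)^2) x ((((s:ℂ)^2)^3)^n)
      (qpoch ((s:ℂ)^2*x) (((s:ℂ)^2)^3) n) (qpoch (((s:ℂ)^2)^2/x) (((s:ℂ)^2)^3) n)
      (qpoch ((s:ℂ)^2) (((s:ℂ)^2)^3) n) (qpoch (((s:ℂ)^2)^2) (((s:ℂ)^2)^3) n)
      hx hC hE h9 h10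

theorem q_gosper_first (n : ℕ) (q x s : ℂ) (hs : s ^ 2 = q)
    (hq0 : 0 < ‖q‖) (hq1 : ‖q‖ < 1) (hx : x ≠ 0)
    (hden : ∀ k ≤ n,
      qpoch q q k * qpoch (-q) q k * qpoch s q k * qpoch (-s) q k *
        qpoch (q ^ (-(3*n : ℤ))) q k ≠ 0)
    (hden2 : qpoch q (q^3) n * qpoch (q^2) (q^3) n ≠ 0) :
    ∑ k ∈ Finset.range (n+1),
      qpoch (q ^ (-(3*n : ℤ))) (q^3) k * (qpoch x q k * qpoch (q/x) q k) /
        (qpoch q q k * qpoch (-q) q k * qpoch s q k * qpoch (-s) q k *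
          qpoch (q ^ (-(3*n : ℤ))) q k) * q^k
      = (qpoch (q*x) (q^3) n * qpoch (q^2/x) (q^3) n) /
          (qpoch q (q^3) n * qpoch (q^2) (q^3) n) := by
  subst hs
  have hs0 : s ≠ 0 := by
    intro h; rw [h] at hq0; simp at hq0
  have habs : ‖s‖ < 1 := by
    by_contra hcon
    push_neg at hcon
    have h1 : (1:ℝ) ≤ ‖s^2‖ := by
      rw [norm_pow]; exact one_le_pow₀ hcon
    linarith
  exact aux s x hs0 habs hx n
end

section
/- For every nonnegative integer n and complex numbers q, x such that no denominator vanishes, the sum over k from 0 to n of (q^{-3n}; q^3)_k * (x;q)_k (q^2/x;q)_k / ((q;q)_k (-q;q)_k (q^{3/2};q)_k (-q^{3/2};q)_k (q^{-1-3n};q)_k) * q^k equals ((q^2 x; q^3)_n (q^4/x; q^3)_n) / ((q^2; q^3)_n (q^4; q^3)_n). (q-analogue of Gosper's second identity, due to Chu.) -/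
open Finset

section Defs
variable {A : Type*} [CommRing A]

def UU (q x : A) (k : ℕ) : A := ∏ j ∈ range k, (1 - x * q ^ j)
def VV (q x : A) (k : ℕ) : A := ∏ j ∈ range k, (x - q ^ (2+j))
def WW (q : A) (n k : ℕ) : A := ∏ j ∈ range k, (q ^ (3*n) - q ^ (3*j))
def ZZ (q : A) (n a b : ℕ) : A := ∏ j ∈ Finset.Ico a b, (q ^ (1+3*n) - q ^ j)
def CP (q : A) (a b : ℕ) : A := ∏ j ∈ Finset.Ico a b, ((1 - q ^ (2*j+2)) * (1 - q ^ (2*j+3)))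
def tt (q x : A) (n k : ℕ) : A :=
  q^(2*k) * WW q n k * UU q x k * VV q x k * x^(n-k) * CP q k n * ZZ q n k n
def hh (q x : A) (n k : ℕ) : A :=
  q^(3*n+2+k) * (1 - x*q^k) * (x - q^(2+k)) * WW q n k * UU q x k * VV q x k *
    x^(n-k) * CP q k n * ZZ q n k n
def AA (q x : A) (n : ℕ) : A := ∏ j ∈ range n, (1 - q^(2+3*j) * x)
def BB (q x : A) (n : ℕ) : A := ∏ j ∈ range n, (x - q^(4+3*j))
def CC (q : A) (n : ℕ) : A := ∏ j ∈ range n, (1 - q^(2+3*j))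
def DD (q : A) (n : ℕ) : A := ∏ j ∈ range n, (1 - q^(4+3*j))

lemma wwzero (q : A) (n : ℕ) : WW q n (n+1) = 0 :=
  Finset.prod_eq_zero (Finset.self_mem_range_succ n) (sub_self _)

lemma ttzero (q x : A) (n : ℕ) : tt q x n (n+1) = 0 := by
  simp [tt, wwzero]

lemma hhzero (q x : A) (n : ℕ) : hh q x n (n+1) = 0 := by
  simp [hh, wwzero]

end Defs

namespace QGR

abbrev R := MvPolynomial (Fin 2) ℤ

noncomputable def Q : R := MvPolynomial.X 0
noncomputable def Xp : R := MvPolynomial.X 1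

lemma nz_of_eval {p : R} (h : MvPolynomial.eval (![2,3] : Fin 2 → ℤ) p ≠ 0) : p ≠ 0 :=
  fun hp => h (by simp [hp])

lemma evQ : MvPolynomial.eval (![2,3] : Fin 2 → ℤ) Q = 2 := by simp [Q]
lemma evX : MvPolynomial.eval (![2,3] : Fin 2 → ℤ) Xp = 3 := by simp [Xp]

lemma nzsub {a b : ℕ} (h : a ≠ b) : Q^a - Q^b ≠ 0 := by
  apply nz_of_eval
  simp only [map_sub, map_pow, evQ]
  intro h0
  apply h
  have h1 : ((2:ℕ)^a : ℤ) = ((2:ℕ)^b : ℤ) := by push_cast; linarith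
  exact Nat.pow_right_injective le_rfl (by exact_mod_cast h1)

lemma nzone {a : ℕ} (h : a ≠ 0) : (1 : R) - Q^a ≠ 0 := by
  have := nzsub (a := 0) (b := a) (Ne.symm h)
  simpa using this

lemma nzQpow (m : ℕ) : (Q : R)^m ≠ 0 :=
  pow_ne_zero _ (MvPolynomial.X_ne_zero _)

end QGR

namespace QGR

lemma wrel (n : ℕ) : ∀ k ≤ n,
    WW Q (n+1) k * (Q^(3*(n+1)) - Q^(3*k)) = WW Q n k * ((Q^(3*(n+1)) - 1) * Q^(3*k)) := by
  intro k
  induction k with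
  | zero => intro _; simp only [WW, Finset.range_zero, Finset.prod_empty]; ring
  | succ j ih =>
    intro hj
    have ihj := ih (by omega)
    rw [show WW Q (n+1) (j+1) = WW Q (n+1) j * (Q^(3*(n+1)) - Q^(3*j)) from
      Finset.prod_range_succ _ _,
      show WW Q n (j+1) = WW Q n j * (Q^(3*n) - Q^(3*j)) from Finset.prod_range_succ _ _]
    linear_combination (Q^(3*(n+1)) - Q^(3*(j+1))) * ihj

lemma wtop (n : ℕ) : WW Q (n+1) (n+1) = (Q^(3*(n+1)) - 1) * (Q^(3*n) * WW Q n n) := by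
  rw [WW, Finset.prod_range_succ']
  have h : ∀ j ∈ range n, (Q^(3*(n+1)) - Q^(3*(j+1))) = Q^3 * (Q^(3*n) - Q^(3*j)) := by
    intro j _; ring
  rw [Finset.prod_congr rfl h, Finset.prod_mul_distrib, Finset.prod_const, Finset.card_range]
  rw [WW]
  ring

lemma zrel (n : ℕ) : ∀ k ≤ n,
    ZZ Q (n+1) k (n+1) * (ZZ Q n 0 n * (((Q^(2+3*n) - 1)*(Q^(3+3*n) - 1)*(Q^(4+3*n) - 1)) * Q^(3*k)))
      = ZZ Q (n+1) 0 (n+1) *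
        (((Q^(2+3*n) - Q^k)*(Q^(3+3*n) - Q^k)*(Q^(4+3*n) - Q^k)) * ZZ Q n k n) := by
  intro k
  induction k with
  | zero => intro _; simp only [pow_zero]; ring
  | succ j ih =>
    intro hj
    have ihj := ih (by omega)
    rw [show ZZ Q (n+1) j (n+1) = (Q^(1+3*(n+1)) - Q^j) * ZZ Q (n+1) (j+1) (n+1) from
      Finset.prod_eq_prod_Ico_succ_bot (by omega) _] at ihj
    rw [show ZZ Q n j n = (Q^(1+3*n) - Q^j) * ZZ Q n (j+1) n from
      Finset.prod_eq_prod_Ico_succ_bot (by omega) _] at ihj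
    apply mul_left_cancel₀ (nzsub (a := 4+3*n) (b := j) (by omega))
    linear_combination (Q^3) * ihj

end QGR

namespace QGR

lemma cert0 (n : ℕ) :
    tt Q Xp (n+1) 0 * (ZZ Q n 0 n * ((1 - Q^(2+3*n))*(1 - Q^(4+3*n))))
    = ((1 - Q^(2+3*n)*Xp)*(Xp - Q^(4+3*n))) * ((1-Q^(2*n+2))*(1-Q^(2*n+3))) *
        ZZ Q (n+1) 0 (n+1) * tt Q Xp n 0
      - ((1-Q^(2*n+2))*(1-Q^(2*n+3))) * ZZ Q (n+1) 0 (n+1) * hh Q Xp n 0 := by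
  simp only [tt, hh, WW, UU, VV, Finset.range_zero, Finset.prod_empty, pow_zero,
    Nat.sub_zero, one_mul, mul_one, Nat.add_zero]
  rw [show CP Q 0 (n+1) = CP Q 0 n * ((1 - Q^(2*(n:ℕ)+2)) * (1 - Q^(2*n+3))) from
    Finset.prod_Ico_succ_top (Nat.zero_le _) _]
  ring

lemma certtop (n : ℕ) :
    tt Q Xp (n+1) (n+1) * (ZZ Q n 0 n * ((1 - Q^(2+3*n))*(1 - Q^(4+3*n))))
    = ((1-Q^(2*n+2))*(1-Q^(2*n+3))) * ZZ Q (n+1) 0 (n+1) * hh Q Xp n n := by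
  have ztop := zrel n n le_rfl
  rw [show ZZ Q (n+1) n (n+1) = (Q^(1+3*(n+1)) - Q^n) * ZZ Q (n+1) (n+1) (n+1) from
    Finset.prod_eq_prod_Ico_succ_bot (by omega) _] at ztop
  rw [show ZZ Q (n+1) (n+1) (n+1) = 1 by rw [ZZ, Finset.Ico_self, Finset.prod_empty],
    show ZZ Q n n n = 1 by rw [ZZ, Finset.Ico_self, Finset.prod_empty]] at ztop
  simp only [tt, hh, Nat.sub_self, pow_zero, mul_one, one_mul] at *
  rw [show CP Q (n+1) (n+1) = 1 by rw [CP, Finset.Ico_self, Finset.prod_empty],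
    show CP Q n n = 1 by rw [CP, Finset.Ico_self, Finset.prod_empty],
    show ZZ Q (n+1) (n+1) (n+1) = 1 by rw [ZZ, Finset.Ico_self, Finset.prod_empty],
    show ZZ Q n n n = 1 by rw [ZZ, Finset.Ico_self, Finset.prod_empty],
    wtop n,
    show UU Q Xp (n+1) = UU Q Xp n * (1 - Xp * Q^n) from Finset.prod_range_succ _ _,
    show VV Q Xp (n+1) = VV Q Xp n * (Xp - Q^(2+n)) from Finset.prod_range_succ _ _]
  apply mul_left_cancel₀ (a := (Q^(1+3*(n+1)) - Q^n) *
    (((Q^(2+3*n) - 1)*(Q^(3+3*n) - 1)*(Q^(4+3*n) - 1)) * Q^(3*n)))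
  · exact mul_ne_zero (nzsub (by omega))
      (mul_ne_zero (mul_ne_zero (mul_ne_zero (by simpa using nzsub (a := 2+3*n) (b := 0) (by omega))
        (by simpa using nzsub (a := 3+3*n) (b := 0) (by omega)))
        (by simpa using nzsub (a := 4+3*n) (b := 0) (by omega))) (nzQpow _))
  · linear_combination (Q^(2*(n+1)) * ((Q^(3*(n+1)) - 1) * (Q^(3*n) * WW Q n n)) *
      (UU Q Xp n * (1 - Xp * Q^n)) * (VV Q Xp n * (Xp - Q^(2+n))) *
      ((1 - Q^(2+3*n))*(1 - Q^(4+3*n)))) * ztop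

lemma certmid (n j : ℕ) (hj : j + 1 ≤ n) :
    tt Q Xp (n+1) (j+1) * (ZZ Q n 0 n * ((1 - Q^(2+3*n))*(1 - Q^(4+3*n))))
    = ((1 - Q^(2+3*n)*Xp)*(Xp - Q^(4+3*n))) * ((1-Q^(2*n+2))*(1-Q^(2*n+3))) *
        ZZ Q (n+1) 0 (n+1) * tt Q Xp n (j+1)
      - ((1-Q^(2*n+2))*(1-Q^(2*n+3))) * ZZ Q (n+1) 0 (n+1) *
          (hh Q Xp n (j+1) - hh Q Xp n j) := by
  have hW := wrel n (j+1) hj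
  rw [show WW Q n (j+1) = WW Q n j * (Q^(3*n) - Q^(3*j)) from Finset.prod_range_succ _ _] at hW
  have hZ := zrel n (j+1) hj
  simp only [tt, hh]
  rw [show WW Q n (j+1) = WW Q n j * (Q^(3*n) - Q^(3*j)) from Finset.prod_range_succ _ _,
    show UU Q Xp (j+1) = UU Q Xp j * (1 - Xp * Q^j) from Finset.prod_range_succ _ _,
    show VV Q Xp (j+1) = VV Q Xp j * (Xp - Q^(2+j)) from Finset.prod_range_succ _ _,
    show CP Q (j+1) (n+1) = CP Q (j+1) n * ((1 - Q^(2*n+2)) * (1 - Q^(2*n+3))) from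
      Finset.prod_Ico_succ_top hj _,
    show CP Q j n = ((1 - Q^(2*j+2)) * (1 - Q^(2*j+3))) * CP Q (j+1) n from
      Finset.prod_eq_prod_Ico_succ_bot (by omega) _,
    show ZZ Q n j n = (Q^(1+3*n) - Q^j) * ZZ Q n (j+1) n from
      Finset.prod_eq_prod_Ico_succ_bot (by omega) _,
    show n+1-(j+1) = (n-(j+1))+1 by omega,
    show n-j = (n-(j+1))+1 by omega,
    pow_succ]
  apply mul_left_cancel₀ (a := (Q^(3*(n+1)) - Q^(3*(j+1))) *
    (((Q^(2+3*n) - 1)*(Q^(3+3*n) - 1)*(Q^(4+3*n) - 1)) * Q^(3*(j+1))))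
  · refine mul_ne_zero (nzsub (by omega)) (mul_ne_zero (mul_ne_zero (mul_ne_zero ?_ ?_) ?_)
      (nzQpow _)) <;>
    · simpa using nzsub (b := 0) (by omega)
  · linear_combination
      ((ZZ Q (n+1) (j+1) (n+1) * (ZZ Q n 0 n *
          (((Q^(2+3*n) - 1)*(Q^(3+3*n) - 1)*(Q^(4+3*n) - 1)) * Q^(3*(j+1))))) *
        (Q^(2*(j+1)) * (UU Q Xp j * (1 - Xp*Q^j)) * (VV Q Xp j * (Xp - Q^(2+j))) *
          (Xp^(n-(j+1)) * Xp) * (CP Q (j+1) n * ((1-Q^(2*n+2))*(1-Q^(2*n+3)))) *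
          ((1 - Q^(2+3*n))*(1 - Q^(4+3*n))))) * hW
      + ((WW Q n j * (Q^(3*n) - Q^(3*j)) * ((Q^(3*(n+1)) - 1) * Q^(3*(j+1)))) *
        (Q^(2*(j+1)) * (UU Q Xp j * (1 - Xp*Q^j)) * (VV Q Xp j * (Xp - Q^(2+j))) *
          (Xp^(n-(j+1)) * Xp) * (CP Q (j+1) n * ((1-Q^(2*n+2))*(1-Q^(2*n+3)))) *
          ((1 - Q^(2+3*n))*(1 - Q^(4+3*n))))) * hZ

noncomputable def Gg (n : ℕ) : ℕ → R
  | 0 => 0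
  | (j+1) => -(((1-Q^(2*n+2))*(1-Q^(2*n+3))) * ZZ Q (n+1) 0 (n+1) * hh Q Xp n j)

lemma step (n : ℕ) :
    (∑ k ∈ range (n+2), tt Q Xp (n+1) k) * (ZZ Q n 0 n * ((1 - Q^(2+3*n))*(1 - Q^(4+3*n))))
    = ((1 - Q^(2+3*n)*Xp)*(Xp - Q^(4+3*n))) * (((1-Q^(2*n+2))*(1-Q^(2*n+3))) *
        (ZZ Q (n+1) 0 (n+1) * (∑ k ∈ range (n+1), tt Q Xp n k))) := by
  have key : ∀ k ∈ range (n+2),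
      tt Q Xp (n+1) k * (ZZ Q n 0 n * ((1 - Q^(2+3*n))*(1 - Q^(4+3*n))))
      = ((1 - Q^(2+3*n)*Xp)*(Xp - Q^(4+3*n))) * ((1-Q^(2*n+2))*(1-Q^(2*n+3))) *
          ZZ Q (n+1) 0 (n+1) * tt Q Xp n k + (Gg n (k+1) - Gg n k) := by
    intro k hk
    match k with
    | 0 => simp only [Gg]; linear_combination cert0 n
    | (j+1) =>
      rcases Nat.lt_or_ge (j+1) (n+1) with h | h
      · simp only [Gg]; linear_combination certmid n j (by omega)
      · have hj : j = n := by simp only [Finset.mem_range] at hk; omega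
        rw [hj]
        simp only [Gg, ttzero, hhzero]
        linear_combination certtop n
  calc (∑ k ∈ range (n+2), tt Q Xp (n+1) k) * (ZZ Q n 0 n * ((1 - Q^(2+3*n))*(1 - Q^(4+3*n))))
      = ∑ k ∈ range (n+2), tt Q Xp (n+1) k * (ZZ Q n 0 n * ((1 - Q^(2+3*n))*(1 - Q^(4+3*n)))) :=
        Finset.sum_mul _ _ _
    _ = ∑ k ∈ range (n+2), (((1 - Q^(2+3*n)*Xp)*(Xp - Q^(4+3*n))) * ((1-Q^(2*n+2))*(1-Q^(2*n+3))) *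
          ZZ Q (n+1) 0 (n+1) * tt Q Xp n k + (Gg n (k+1) - Gg n k)) := Finset.sum_congr rfl key
    _ = (((1 - Q^(2+3*n)*Xp)*(Xp - Q^(4+3*n))) * ((1-Q^(2*n+2))*(1-Q^(2*n+3))) *
          ZZ Q (n+1) 0 (n+1)) * (∑ k ∈ range (n+2), tt Q Xp n k) + (Gg n (n+2) - Gg n 0) := by
        rw [Finset.sum_add_distrib, Finset.sum_range_sub (Gg n), ← Finset.mul_sum]
    _ = _ := by
        rw [Finset.sum_range_succ (tt Q Xp n), ttzero]
        simp only [Gg, hhzero]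
        ring

lemma main (n : ℕ) :
    (∑ k ∈ range (n+1), tt Q Xp n k) * (CC Q n * DD Q n)
      = AA Q Xp n * BB Q Xp n * (CP Q 0 n * ZZ Q n 0 n) := by
  induction n with
  | zero => simp [tt, WW, UU, VV, CP, ZZ, AA, BB, CC, DD]
  | succ n ih =>
    have hz0 : ZZ Q n 0 n ≠ 0 := by
      rw [ZZ]
      exact Finset.prod_ne_zero_iff.mpr fun j hj =>
        nzsub (by simp only [Finset.mem_Ico] at hj; omega)
    apply mul_right_cancel₀ hz0
    have st := step n
    rw [show CC Q (n+1) = CC Q n * (1 - Q^(2+3*n)) from Finset.prod_range_succ _ _,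
      show DD Q (n+1) = DD Q n * (1 - Q^(4+3*n)) from Finset.prod_range_succ _ _,
      show AA Q Xp (n+1) = AA Q Xp n * (1 - Q^(2+3*n)*Xp) from Finset.prod_range_succ _ _,
      show BB Q Xp (n+1) = BB Q Xp n * (Xp - Q^(4+3*n)) from Finset.prod_range_succ _ _,
      show CP Q 0 (n+1) = CP Q 0 n * ((1 - Q^(2*n+2)) * (1 - Q^(2*n+3))) from
        Finset.prod_Ico_succ_top (Nat.zero_le _) _]
    linear_combination (CC Q n * DD Q n) * st +
      (((1 - Q^(2+3*n)*Xp)*(Xp - Q^(4+3*n))) * (((1-Q^(2*n+2))*(1-Q^(2*n+3))) *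
        ZZ Q (n+1) 0 (n+1))) * ih

end QGR

lemma mainC (q x : ℂ) (n : ℕ) :
    (∑ k ∈ Finset.range (n+1), tt q x n k) * (CC q n * DD q n)
      = AA q x n * BB q x n * (CP q 0 n * ZZ q n 0 n) := by
  have h := congrArg (MvPolynomial.aeval (R := ℤ) ![q, x]) (QGR.main n)
  simpa only [map_mul, map_sum, map_prod, map_sub, map_pow, map_one, tt, hh, UU, VV, WW,
    ZZ, CP, AA, BB, CC, DD, QGR.Q, QGR.Xp, MvPolynomial.aeval_X, Matrix.cons_val_zero,
    Matrix.cons_val_one, Matrix.head_cons] using h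

theorem q_gosper_second (n : ℕ) (q x s : ℂ) (hs : s ^ 2 = q) (hq : q ≠ 0) (hx : x ≠ 0)
    (hden : ∀ k ≤ n,
      qpoch q q k * qpoch (-q) q k * qpoch (q*s) q k * qpoch (-(q*s)) q k *
        qpoch (q ^ (-1 - 3*n : ℤ)) q k ≠ 0)
    (hden2 : qpoch (q^2) (q^3) n * qpoch (q^4) (q^3) n ≠ 0) :
    ∑ k ∈ Finset.range (n+1),
      qpoch (q ^ (-(3*n : ℤ))) (q^3) k * (qpoch x q k * qpoch (q^2/x) q k) /
        (qpoch q q k * qpoch (-q) q k * qpoch (q*s) q k * qpoch (-(q*s)) q k *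
          qpoch (q ^ (-1 - 3*n : ℤ)) q k) * q^k
      = (qpoch (q^2*x) (q^3) n * qpoch (q^4/x) (q^3) n) /
          (qpoch (q^2) (q^3) n * qpoch (q^4) (q^3) n) := by
  have hqp : ∀ m : ℕ, q ^ m ≠ 0 := fun m => pow_ne_zero m hq
  -- conversion lemmas
  have hc2 : ∀ k : ℕ, qpoch (q^2/x) q k * x^k = VV q x k := by
    intro k
    rw [qpoch, VV, show x^k = ∏ _j ∈ Finset.range k, x by
      rw [Finset.prod_const, Finset.card_range], ← Finset.prod_mul_distrib]
    exact Finset.prod_congr rfl fun j _ => by field_simp; ring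
  have hz3 : q ^ (-(3*(n:ℤ))) = (q^(3*n))⁻¹ := by
    rw [zpow_neg, ← zpow_natCast]; norm_cast
  have hc3 : ∀ k : ℕ, qpoch (q ^ (-(3*n : ℤ))) (q^3) k * (q^(3*n))^k = WW q n k := by
    intro k
    rw [qpoch, WW, show (q^(3*n))^k = ∏ _j ∈ Finset.range k, q^(3*n) by
      rw [Finset.prod_const, Finset.card_range], ← Finset.prod_mul_distrib]
    refine Finset.prod_congr rfl fun j _ => ?_
    rw [hz3]
    field_simp
    ring
  have hz4 : q ^ (-1 - 3*(n:ℤ)) = (q^(1+3*n))⁻¹ := by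
    rw [show (-1 - 3*(n:ℤ)) = -(1+3*(n:ℤ)) by ring, zpow_neg, ← zpow_natCast]
    norm_cast
  have hc4 : ∀ k : ℕ, qpoch (q ^ (-1 - 3*n : ℤ)) q k * (q^(1+3*n))^k = ZZ q n 0 k := by
    intro k
    rw [qpoch, ZZ, Nat.Ico_zero_eq_range, show (q^(1+3*n))^k = ∏ _j ∈ Finset.range k, q^(1+3*n) by
      rw [Finset.prod_const, Finset.card_range], ← Finset.prod_mul_distrib]
    refine Finset.prod_congr rfl fun j _ => ?_
    rw [hz4]
    field_simp
  have hc5 : ∀ k : ℕ, qpoch q q k * qpoch (-q) q k * qpoch (q*s) q k * qpoch (-(q*s)) q k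
      = CP q 0 k := by
    intro k
    rw [qpoch, qpoch, qpoch, qpoch, CP, Nat.Ico_zero_eq_range, ← Finset.prod_mul_distrib,
      ← Finset.prod_mul_distrib, ← Finset.prod_mul_distrib]
    refine Finset.prod_congr rfl fun j _ => ?_
    linear_combination (-(1 - q^(2*j+2)) * q^(2*j+2)) * hs
  have hden' : ∀ k : ℕ,
      (qpoch q q k * qpoch (-q) q k * qpoch (q*s) q k * qpoch (-(q*s)) q k *
        qpoch (q ^ (-1 - 3*n : ℤ)) q k) * (q^(1+3*n))^k = CP q 0 k * ZZ q n 0 k := by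
    intro k
    rw [← hc5 k, ← hc4 k]
    ring
  have hCZ : ∀ k ≤ n, CP q 0 k * ZZ q n 0 k ≠ 0 := by
    intro k hk
    rw [← hden' k]
    exact mul_ne_zero (hden k hk) (pow_ne_zero _ (hqp _))
  have hDn : x^n * (CP q 0 n * ZZ q n 0 n) ≠ 0 :=
    mul_ne_zero (pow_ne_zero _ hx) (hCZ n le_rfl)
  have key : ∀ k ∈ Finset.range (n+1),
      qpoch (q ^ (-(3*n : ℤ))) (q^3) k * (qpoch x q k * qpoch (q^2/x) q k) /
        (qpoch q q k * qpoch (-q) q k * qpoch (q*s) q k * qpoch (-(q*s)) q k *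
          qpoch (q ^ (-1 - 3*n : ℤ)) q k) * q^k
        = tt q x n k / (x^n * (CP q 0 n * ZZ q n 0 n)) := by
    intro k hk
    have hkn : k ≤ n := by simp only [Finset.mem_range] at hk; omega
    rw [eq_div_iff hDn, div_mul_eq_mul_div, div_mul_eq_mul_div, div_eq_iff (hden k hkn)]
    rw [show x^n = x^k * x^(n-k) by rw [← pow_add]; congr 1; omega,
      show CP q 0 n = CP q 0 k * CP q k n from
        (Finset.prod_Ico_consecutive _ (Nat.zero_le k) hkn).symm,
      show ZZ q n 0 n = ZZ q n 0 k * ZZ q n k n from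
        (Finset.prod_Ico_consecutive _ (Nat.zero_le k) hkn).symm,
      show qpoch x q k = UU q x k from rfl, tt]
    have hF : ((q^(3*n))^k * x^k * (q^(1+3*n))^k : ℂ) ≠ 0 :=
      mul_ne_zero (mul_ne_zero (pow_ne_zero _ (hqp _)) (pow_ne_zero _ hx))
        (pow_ne_zero _ (hqp _))
    apply mul_right_cancel₀ hF
    linear_combination
      ((UU q x k * (qpoch (q^2/x) q k * x^k)) * (q^k *
        (x^k * x^(n-k) * (CP q 0 k * CP q k n * (ZZ q n 0 k * ZZ q n k n)))) *
        (q^(1+3*n))^k) * hc3 k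
      + ((WW q n k * UU q x k) * (q^k *
        (x^k * x^(n-k) * (CP q 0 k * CP q k n * (ZZ q n 0 k * ZZ q n k n)))) *
        (q^(1+3*n))^k) * hc2 k
      - ((q^(2*k) * WW q n k * UU q x k * VV q x k * x^(n-k) * CP q k n * ZZ q n k n) *
        ((q^(3*n))^k * x^k)) * hden' k
  rw [Finset.sum_congr rfl key, ← Finset.sum_div]
  have e8 : qpoch (q^2) (q^3) n = CC q n :=
    Finset.prod_congr rfl fun j _ => by ring
  have e9 : qpoch (q^4) (q^3) n = DD q n :=
    Finset.prod_congr rfl fun j _ => by ring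
  have e6 : qpoch (q^2*x) (q^3) n = AA q x n :=
    Finset.prod_congr rfl fun j _ => by ring
  have hc7 : qpoch (q^4/x) (q^3) n * x^n = BB q x n := by
    rw [qpoch, BB, show x^n = ∏ _j ∈ Finset.range n, x by
      rw [Finset.prod_const, Finset.card_range], ← Finset.prod_mul_distrib]
    exact Finset.prod_congr rfl fun j _ => by field_simp; ring
  rw [e8, e9] at hden2
  rw [e8, e9, e6]
  have hCD : CC q n * DD q n ≠ 0 := hden2
  rw [div_eq_div_iff hDn hCD]
  linear_combination mainC q x n - (AA q x n * (CP q 0 n * ZZ q n 0 n)) * hc7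
end

section
/- The infinite series sum over k from 0 to infinity of k! / (3/2)_k * (1/4)^k converges and equals 2*pi/(3*sqrt(3)). -/
/-- Pochhammer symbol (rising factorial) `(a)_k` over the reals. -/
noncomputable def pochR (a : ℝ) (k : ℕ) : ℝ := ∏ j ∈ Finset.range k, (a + j)

open Real intervalIntegral Filter

noncomputable def Jint (k : ℕ) : ℝ := ∫ u in (0:ℝ)..1, (1 - u^2)^k

lemma cont_pow (k : ℕ) : Continuous fun u : ℝ => (1 - u^2)^k := by continuity

lemma J_rec (k : ℕ) : (2*(k:ℝ)+3) * Jint (k+1) = (2*k+2) * Jint k := by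
  have hderiv : ∀ u ∈ Set.uIcc (0:ℝ) 1,
      HasDerivAt (fun u : ℝ => u * (1-u^2)^(k+1))
        ((2*(k:ℝ)+3) * (1-u^2)^(k+1) - (2*k+2) * (1-u^2)^k) u := by
    intro u _
    have h1 : HasDerivAt (fun u : ℝ => 1 - u^2) (-(2*u)) u := by
      simpa using ((hasDerivAt_pow 2 u).const_sub 1)
    have h2 := (h1.pow (k+1)).const_mul u
    have h3 : HasDerivAt (fun u : ℝ => u * (1-u^2)^(k+1)) (1 * (1-u^2)^(k+1) + u * (((k+1:ℕ):ℝ) * (1-u^2)^(k+1-1) * -(2*u))) u := ((hasDerivAt_id u).mul (h1.pow (k+1)))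
    convert h3 using 1
    push_cast [pow_succ]
    ring
  have hint : IntervalIntegrable
      (fun u : ℝ => (2*(k:ℝ)+3) * (1-u^2)^(k+1) - (2*k+2) * (1-u^2)^k) MeasureTheory.volume 0 1 :=
    ((continuous_const.mul (cont_pow (k+1))).sub (continuous_const.mul (cont_pow k))).intervalIntegrable 0 1
  have := integral_eq_sub_of_hasDerivAt hderiv hint
  rw [intervalIntegral.integral_sub (f := fun u : ℝ => (2*(k:ℝ)+3) * (1-u^2)^(k+1)) (g := fun u : ℝ => (2*(k:ℝ)+2) * (1-u^2)^k) ((continuous_const.mul (cont_pow (k+1))).intervalIntegrable 0 1)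
      ((continuous_const.mul (cont_pow k)).intervalIntegrable 0 1),
    intervalIntegral.integral_const_mul, intervalIntegral.integral_const_mul] at this
  have h0 : (1:ℝ) * (1-1^2)^(k+1) - 0 * (1-0^2)^(k+1) = 0 := by norm_num
  rw [h0] at this
  have : (2*(k:ℝ)+3) * Jint (k+1) - (2*k+2) * Jint k = 0 := this
  linarith

lemma pochR_pos (k : ℕ) : 0 < pochR (3/2) k := by
  apply Finset.prod_pos; intro j _; positivity

lemma J_eq (k : ℕ) : Jint k = (Nat.factorial k : ℝ) / pochR (3/2) k := by
  induction k with
  | zero => simp [Jint, pochR]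
  | succ k ih =>
    have hrec := J_rec k
    have h1 : Jint (k+1) = (2*(k:ℝ)+2)/(2*k+3) * Jint k := by
      field_simp at hrec ⊢; linarith
    rw [h1, ih]
    have hps : pochR (3/2) (k+1) = pochR (3/2) k * (3/2 + k) := Finset.prod_range_succ _ _
    rw [hps]
    have hp := pochR_pos k
    have hp2 : (3:ℝ)/2 + k > 0 := by positivity
    rw [Nat.factorial_succ]
    push_cast
    field_simp
    ring

lemma term_eq (k : ℕ) : (Nat.factorial k : ℝ) / pochR (3/2) k * (1/4)^k
    = ∫ u in (0:ℝ)..1, ((1 - u^2)/4)^k := by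
  rw [← J_eq]
  simp only [div_pow, Jint]
  rw [intervalIntegral.integral_div]
  simp [div_eq_mul_inv]

lemma cont_q (k : ℕ) : Continuous fun u : ℝ => ((1 - u^2)/4)^k := by continuity

lemma partial_sum_eq (N : ℕ) :
    ∑ k ∈ Finset.range N, (Nat.factorial k : ℝ) / pochR (3/2) k * (1/4)^k
    = (∫ u in (0:ℝ)..1, 4/(3+u^2)) - ∫ u in (0:ℝ)..1, 4*((1-u^2)/4)^N/(3+u^2) := by
  simp only [term_eq]
  rw [← intervalIntegral.integral_finset_sum (fun k _ => (cont_q k).intervalIntegrable 0 1)]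
  have hc1 : Continuous fun u : ℝ => 4/(3+u^2) := by
    apply Continuous.div continuous_const (by continuity)
    intro u; positivity
  have hc2 : Continuous fun u : ℝ => 4*((1-u^2)/4)^N/(3+u^2) := by
    apply Continuous.div (by continuity) (by continuity)
    intro u; positivity
  rw [← intervalIntegral.integral_sub (hc1.intervalIntegrable 0 1) (hc2.intervalIntegrable 0 1)]
  apply intervalIntegral.integral_congr
  intro u _
  simp only
  have hq : ((1-u^2)/4 : ℝ) ≠ 1 := by
    intro h
    nlinarith [sq_nonneg u, (by linarith [h] : (1-u^2) = 4)]
  rw [geom_sum_eq hq]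
  obtain ⟨X, hX⟩ : ∃ X : ℝ, ((1-u^2)/4)^N = X := ⟨_, rfl⟩
  rw [hX]
  have h3 : (3:ℝ) + u^2 ≠ 0 := by positivity
  have : ((1-u^2)/4 : ℝ) - 1 = -(3+u^2)/4 := by ring
  have hne : (-(3+u^2)/4 : ℝ) ≠ 0 := by
    intro h
    apply h3
    linarith
  rw [this, div_eq_iff hne]
  field_simp
  ring

lemma err_bound (N : ℕ) :
    ‖∫ u in (0:ℝ)..1, 4*((1-u^2)/4)^N/(3+u^2)‖ ≤ (4/3) * (1/4)^N := by
  have h := intervalIntegral.norm_integral_le_of_norm_le_const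
      (a := (0:ℝ)) (b := 1) (C := (4/3) * (1/4)^N)
      (f := fun u : ℝ => 4*((1-u^2)/4)^N/(3+u^2)) ?_
  · simpa using h
  · intro u hu
    rw [Set.uIoc_of_le (by norm_num : (0:ℝ) ≤ 1)] at hu
    obtain ⟨h0, h1⟩ := hu
    have hq0 : (0:ℝ) ≤ (1-u^2)/4 := by nlinarith
    have hq1 : (1-u^2)/4 ≤ 1/4 := by nlinarith
    have hp : ((1-u^2)/4)^N ≤ (1/4)^N := pow_le_pow_left₀ hq0 hq1 N
    have hp0 : (0:ℝ) ≤ ((1-u^2)/4)^N := pow_nonneg hq0 N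
    have hd : (3:ℝ) ≤ 3 + u^2 := by nlinarith
    have hnn : (0:ℝ) ≤ 4*((1-u^2)/4)^N/(3+u^2) := by positivity
    rw [Real.norm_eq_abs, abs_of_nonneg hnn]
    rw [div_le_iff₀ (by positivity)]
    calc 4*((1-u^2)/4)^N ≤ 4*(1/4)^N := by nlinarith
      _ ≤ 4/3 * (1/4)^N * 3 := by ring_nf; nlinarith [pow_nonneg (by norm_num : (0:ℝ) ≤ 1/4) N]
      _ ≤ 4/3 * (1/4)^N * (3 + u^2) := by nlinarith [pow_nonneg (by norm_num : (0:ℝ) ≤ 1/4) N]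

lemma arctan_inv_sqrt3 : Real.arctan (1 / Real.sqrt 3) = π / 6 := by
  rw [← Real.tan_pi_div_six, Real.arctan_tan] <;> linarith [Real.pi_pos]

lemma sqrt3_pos : (0:ℝ) < Real.sqrt 3 := Real.sqrt_pos.mpr (by norm_num)

lemma int_val : (∫ u in (0:ℝ)..1, 4/(3+u^2)) = 2 * π / (3 * Real.sqrt 3) := by
  have hs3 : Real.sqrt 3 ^ 2 = 3 := Real.sq_sqrt (by norm_num)
  have hne : Real.sqrt 3 ≠ 0 := ne_of_gt sqrt3_pos
  have hcong : (∫ u in (0:ℝ)..1, 4/(3+u^2))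
      = ∫ u in (0:ℝ)..1, (fun x : ℝ => 4/3 * (1+x^2)⁻¹) (u / Real.sqrt 3) := by
    apply intervalIntegral.integral_congr
    intro u _
    simp only [div_pow, hs3, mul_inv_eq_iff_eq_mul, ← div_eq_mul_inv]
    rw [div_eq_div_iff (by positivity) (by positivity)]
    ring
  rw [hcong, intervalIntegral.integral_comp_div (f := fun x : ℝ => 4/3 * (1+x^2)⁻¹) hne,
    integral_const_mul, integral_inv_one_add_sq]
  rw [zero_div, Real.arctan_zero, arctan_inv_sqrt3]
  rw [smul_eq_mul, eq_div_iff (by positivity)]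
  nlinarith [hs3, sqrt3_pos, Real.pi_pos]

theorem pi_series :
    HasSum (fun k : ℕ => (Nat.factorial k : ℝ) / pochR (3/2) k * (1/4 : ℝ)^k)
      (2 * Real.pi / (3 * Real.sqrt 3)) := by
  have hnonneg : ∀ k : ℕ, 0 ≤ (Nat.factorial k : ℝ) / pochR (3/2) k * (1/4 : ℝ)^k := by
    intro k
    have := pochR_pos k
    positivity
  rw [hasSum_iff_tendsto_nat_of_nonneg hnonneg]
  have heq : (fun N => ∑ k ∈ Finset.range N,
      (Nat.factorial k : ℝ) / pochR (3/2) k * (1/4 : ℝ)^k)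
      = fun N => (2 * Real.pi / (3 * Real.sqrt 3))
        - ∫ u in (0:ℝ)..1, 4*((1-u^2)/4)^N/(3+u^2) := by
    funext N
    rw [partial_sum_eq, int_val]
  rw [heq]
  have herr : Filter.Tendsto (fun N : ℕ => ∫ u in (0:ℝ)..1, 4*((1-u^2)/4)^N/(3+u^2))
      Filter.atTop (nhds 0) := by
    apply squeeze_zero_norm err_bound
    have : Filter.Tendsto (fun N : ℕ => (4/3 : ℝ) * (1/4)^N) Filter.atTop (nhds ((4/3) * 0)) :=
      (tendsto_pow_atTop_nhds_zero_of_lt_one (by norm_num) (by norm_num)).const_mul _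
    simpa using this
  simpa using tendsto_const_nhds.sub herr
end
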